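/- Let c : {0,1}^n → {0,1}, let G : {0,1}^m → {0,1}^{n+1} be any map, and let D be the pushforward of the uniform distribution on {0,1}^m under G. If d_TV(D, D_c) < 1/2, then m ≥ n. -/

import Mathlib

/-- The graph distribution `D_c` on `{0,1}^{n+1}` of a Boolean function
`c : {0,1}^n → {0,1}`: it assigns probability `2^{-n}` to each string `x‖c(x)`
and `0` otherwise. -/
noncomputable def boolGraphDist (n : ℕ) (c : (Fin n → Bool) → Bool) :
    (Fin (n + 1) → Bool) → ℝ :=
  fun y => if ∃ x : Fin n → Bool, y = Fin.snoc x (c x) then (1 : ℝ) / 2 ^ n else 0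

/-- The pushforward of the uniform distribution on `{0,1}^m` under
`G : {0,1}^m → {0,1}^{n+1}`. -/
noncomputable def pushUnif (n m : ℕ) (G : (Fin m → Bool) → (Fin (n + 1) → Bool)) :
    (Fin (n + 1) → Bool) → ℝ :=
  fun y => ((Finset.univ.filter fun x : Fin m → Bool => G x = y).card : ℝ) / 2 ^ m

/-- Total variation distance between distributions on a finite type. -/
noncomputable def tvDist {α : Type*} [Fintype α] (P Q : α → ℝ) : ℝ :=
  (1 / 2) * ∑ y, |P y - Q y|

theorem le_of_tvDist_lt_half (n m : ℕ) (c : (Fin n → Bool) → Bool)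
    (G : (Fin m → Bool) → (Fin (n + 1) → Bool))
    (h : tvDist (pushUnif n m G) (boolGraphDist n c) < 1 / 2) :
    n ≤ m := by
  classical
  by_contra hnm
  push_neg at hnm
  set P := pushUnif n m G with hP
  set Q := boolGraphDist n c with hQdef
  set S : Finset (Fin (n+1) → Bool) :=
    Finset.univ.filter (fun y => ∃ x, y = Fin.snoc x (c x)) with hS
  set T : Finset (Fin (n+1) → Bool) := S \ Finset.image G Finset.univ with hT
  have hsnoc_inj : Function.Injective (fun x : Fin n → Bool => (Fin.snoc x (c x) : Fin (n+1) → Bool)) := by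
    intro a b hab
    funext i
    have := congrFun hab (Fin.castSucc i)
    simpa using this
  have hScard : S.card = 2 ^ n := by
    have hSim : S = Finset.image (fun x : Fin n → Bool => Fin.snoc x (c x)) Finset.univ := by
      ext y
      simp only [hS, Finset.mem_filter, Finset.mem_univ, true_and, Finset.mem_image]
      constructor <;> rintro ⟨x, hx⟩ <;> exact ⟨x, hx.symm⟩
    rw [hSim, Finset.card_image_of_injective _ hsnoc_inj]
    simp
  -- values on T
  have hTQ : ∀ y ∈ T, Q y = 1 / 2 ^ n := by
    intro y hy
    rw [hT, Finset.mem_sdiff] at hy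
    have hyS := hy.1
    rw [hS, Finset.mem_filter] at hyS
    simp [hQdef, boolGraphDist, hyS.2]
  have hTP : ∀ y ∈ T, P y = 0 := by
    intro y hy
    rw [hT, Finset.mem_sdiff] at hy
    have : (Finset.univ.filter fun x : Fin m → Bool => G x = y) = ∅ := by
      ext x
      simp only [Finset.mem_filter, Finset.mem_univ, true_and, Finset.notMem_empty,
        iff_false]
      intro hGx
      exact hy.2 (Finset.mem_image.mpr ⟨x, Finset.mem_univ x, hGx⟩)
    simp [hP, pushUnif, this]
  -- cardinality bound
  have hTcard : (2:ℝ)^n - 2^m ≤ (T.card : ℝ) := by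
    have h1 : S.card ≤ T.card + (Finset.image G Finset.univ).card := by
      rw [hT]
      exact Finset.card_le_card_sdiff_add_card
    have h2 : (Finset.image G Finset.univ).card ≤ 2 ^ m := by
      calc (Finset.image G Finset.univ).card ≤ (Finset.univ : Finset (Fin m → Bool)).card :=
            Finset.card_image_le
        _ = 2 ^ m := by simp
    have := hScard ▸ h1
    have h3 : (2:ℕ)^n ≤ T.card + 2 ^ m := le_trans this (by omega)
    have := Nat.cast_le (α := ℝ) |>.mpr h3
    push_cast at this
    linarith
  -- total sums
  have hPsum : ∑ y, P y = 1 := by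
    have hfib : (Finset.univ : Finset (Fin m → Bool)).card
        = ∑ y : Fin (n+1) → Bool, (Finset.univ.filter fun x => G x = y).card :=
      Finset.card_eq_sum_card_fiberwise (fun x _ => Finset.mem_univ (G x))
    have : ∑ y, P y = (∑ y : Fin (n+1) → Bool,
        ((Finset.univ.filter fun x => G x = y).card : ℝ)) / 2 ^ m := by
      simp [hP, pushUnif, Finset.sum_div]
    rw [this, ← Nat.cast_sum, ← hfib]
    simp
  have hQsum : ∑ y, Q y = 1 := by
    have : ∑ y, Q y = ∑ y ∈ S, (1:ℝ) / 2 ^ n := by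
      rw [hS, Finset.sum_filter]
      apply Finset.sum_congr rfl
      intro y _
      simp [hQdef, boolGraphDist]
    rw [this, Finset.sum_const, hScard]
    rw [nsmul_eq_mul]
    push_cast
    field_simp
  -- sums over T
  have hTQsum : ∑ y ∈ T, Q y = (T.card : ℝ) / 2 ^ n := by
    rw [Finset.sum_congr rfl hTQ, Finset.sum_const]
    rw [nsmul_eq_mul]
    field_simp
  have hTPsum : ∑ y ∈ T, P y = 0 := Finset.sum_eq_zero hTP
  set A : ℝ := (T.card : ℝ) / 2 ^ n with hA
  have hAhalf : 1 / 2 ≤ A := by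
    rw [hA, le_div_iff₀ (by positivity)]
    have h2mn : (2:ℝ)^(m+1) ≤ 2^n := by
      have : m + 1 ≤ n := hnm
      exact pow_le_pow_right₀ (by norm_num) this
    rw [pow_succ] at h2mn
    linarith
  -- abs sums
  have hTabs : ∑ y ∈ T, |P y - Q y| = A := by
    rw [← hTQsum]
    apply Finset.sum_congr rfl
    intro y hy
    rw [hTP y hy, hTQ y hy, zero_sub, abs_neg, abs_of_nonneg (by positivity)]
  have hcompl : A ≤ ∑ y ∈ Tᶜ, |P y - Q y| := by
    have hle : ∑ y ∈ Tᶜ, (P y - Q y) ≤ ∑ y ∈ Tᶜ, |P y - Q y| :=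
      Finset.sum_le_sum fun y _ => le_abs_self _
    have hsplit : ∑ y ∈ Tᶜ, (P y - Q y) = A := by
      have h1 : ∑ y ∈ Tᶜ, P y + ∑ y ∈ T, P y = ∑ y, P y :=
        Finset.sum_compl_add_sum T P
      have h2 : ∑ y ∈ Tᶜ, Q y + ∑ y ∈ T, Q y = ∑ y, Q y :=
        Finset.sum_compl_add_sum T Q
      rw [Finset.sum_sub_distrib]
      rw [hPsum, hTPsum] at h1
      rw [hQsum, hTQsum] at h2
      rw [hA]
      linarith
    linarith
  have htot : 1 ≤ ∑ y, |P y - Q y| := by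
    have := Finset.sum_compl_add_sum T (fun y => |P y - Q y|)
    rw [← this, hTabs]
    linarith
  rw [tvDist] at h
  linarith
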